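/- On H = L²(𝕋) with D = (1/i) d/dθ, the multiplication operator M_{|x|} by the function |x|(θ) = |θ| (for θ ∈ (−π, π]) is weakly D-differentiable with wD(M_{|x|}) = (1/i) M_{sign(x)}, where sign(x)(θ) is the sign of θ; moreover ‖α_t(M_{|x|}) − M_{|x|}‖ = |t| for |t| ≤ π. -/

import Mathlib

open Complex Filter Topology MeasureTheory
open scoped Topology

local notation "⟪" x ", " y "⟫" => @inner ℂ _ _ x y

instance : Fact ((0 : ℝ) < 2 * Real.pi) := ⟨by positivity⟩

/-- The unit circle `𝕋 = ℝ / 2πℤ`. -/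
abbrev Circ : Type := AddCircle (2 * Real.pi)

/-- The Hilbert space `H = L²(𝕋)`. -/
noncomputable abbrev H2 : Type := MeasureTheory.Lp ℂ 2 (volume : Measure Circ)

/-- The function `|x|` on the circle: `θ ↦ |θ|` for `θ ∈ (−π, π]`. -/
noncomputable def absFun : Circ → ℝ :=
  AddCircle.liftIoc (2 * Real.pi) (-Real.pi) (fun x : ℝ => |x|)

/-- The function `sign(x)` on the circle: `θ ↦ sign θ` for `θ ∈ (−π, π]`. -/
noncomputable def signFun : Circ → ℝ :=
  AddCircle.liftIoc (2 * Real.pi) (-Real.pi) (fun x : ℝ => Real.sign x)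

/-- `b` is the bounded operator implementing the commutator form
`(ξ, η) ↦ ⟨aξ, Dη⟩ − ⟨aDξ, η⟩` on `dom D × dom D`, i.e. `a` is weakly
`D`-differentiable with `wD(a) = b`. -/
def IsWeakDeriv (D : H2 →ₗ.[ℂ] H2) (a b : H2 →L[ℂ] H2) : Prop :=
  ∀ ξ η : D.domain, ⟪b (ξ : H2), (η : H2)⟫ = ⟪a (ξ : H2), D η⟫ - ⟪a (D ξ), (η : H2)⟫

/-- `conjAd U t a = U t ∘ a ∘ U (−t)`, i.e. `α_t(a) = e^{itD} a e^{-itD}`. -/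
noncomputable def conjAd (U : ℝ → H2 →L[ℂ] H2) (t : ℝ) (a : H2 →L[ℂ] H2) : H2 →L[ℂ] H2 :=
  (U t).comp (a.comp (U (-t)))

/-- `U` is the strongly continuous one-parameter unitary group `t ↦ e^{itD}`
generated by the self-adjoint operator `D` (Stone's theorem characterization). -/
structure IsStoneGroupOf (D : H2 →ₗ.[ℂ] H2) (U : ℝ → H2 →L[ℂ] H2) : Prop where
  map_zero : U 0 = 1
  map_add : ∀ s t : ℝ, U (s + t) = (U s).comp (U t)
  isometry : ∀ (t : ℝ) (ξ : H2), ‖U t ξ‖ = ‖ξ‖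
  hasDerivAt : ∀ ξ : D.domain, HasDerivAt (fun t : ℝ => U t (ξ : H2)) (Complex.I • D ξ) 0
  mem_domain : ∀ ξ v : H2, HasDerivAt (fun t : ℝ => U t ξ) v 0 → ξ ∈ D.domain

/-- `M` is the multiplication operator by the (bounded) function `g` on `L²(𝕋)`. -/
def IsMulOp (g : Circ → ℝ) (M : H2 →L[ℂ] H2) : Prop :=
  ∀ f : H2, (M f : Circ → ℂ) =ᵐ[volume] fun θ => (g θ : ℂ) * (f : Circ → ℂ) θ

/-- `U t` is translation by `t`: `(e^{itD} f)(θ) = f(θ + t)`, where `D = (1/i) d/dθ`. -/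
def IsTranslation (U : ℝ → H2 →L[ℂ] H2) : Prop :=
  ∀ (t : ℝ) (f : H2), (U t f : Circ → ℂ) =ᵐ[volume]
    fun θ => (f : Circ → ℂ) (θ + (t : Circ))

lemma ae_comp_add {f g : Circ → ℂ} (h : f =ᵐ[volume] g) (c : Circ) :
    (fun θ : Circ => f (θ + c)) =ᵐ[volume] fun θ => g (θ + c) := by
  have hmp : MeasurePreserving (fun x : Circ => x + c) volume volume :=
    measurePreserving_add_right volume c
  have := MeasureTheory.ae_eq_comp (hmp.measurable.aemeasurable) (by rwa [hmp.map_eq] : f =ᵐ[(volume : Measure Circ).map (fun x : Circ => x + c)] g)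
  exact this

lemma conjAd_ae {U : ℝ → H2 →L[ℂ] H2} (hUt : IsTranslation U) {g : Circ → ℝ}
    {M : H2 →L[ℂ] H2} (hM : IsMulOp g M) (t : ℝ) (f : H2) :
    (conjAd U t M f : Circ → ℂ) =ᵐ[volume]
      fun θ => (g (θ + (t : Circ)) : ℂ) * (f : Circ → ℂ) θ := by
  have h1 : (conjAd U t M f : Circ → ℂ) =ᵐ[volume]
      fun θ => (M (U (-t) f) : Circ → ℂ) (θ + (t : Circ)) := hUt t (M (U (-t) f))
  have h2 : (fun θ : Circ => (M (U (-t) f) : Circ → ℂ) (θ + (t : Circ))) =ᵐ[volume]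
      fun θ => (g (θ + (t : Circ)) : ℂ) * (U (-t) f : Circ → ℂ) (θ + (t : Circ)) :=
    ae_comp_add (hM (U (-t) f)) _
  have h3 : (fun θ : Circ => (U (-t) f : Circ → ℂ) (θ + (t : Circ))) =ᵐ[volume]
      fun θ => (f : Circ → ℂ) (θ + (t : Circ) + ((-t : ℝ) : Circ)) :=
    ae_comp_add (hUt (-t) f) _
  refine h1.trans (h2.trans ?_)
  have h4 : ∀ θ : Circ, θ + (t : Circ) + ((-t : ℝ) : Circ) = θ := by
    intro θ
    have : ((-t : ℝ) : Circ) = -(t : Circ) := AddCircle.coe_neg _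
    rw [this, add_neg_cancel_right]
  filter_upwards [h3] with θ hθ
  rw [hθ, h4]

lemma mulOpLike_norm_le {T : H2 →L[ℂ] H2} {h : Circ → ℝ}
    (hT : ∀ f : H2, (T f : Circ → ℂ) =ᵐ[volume] fun θ => (h θ : ℂ) * (f : Circ → ℂ) θ)
    {c : ℝ} (hc : 0 ≤ c) (hb : ∀ θ, |h θ| ≤ c) : ‖T‖ ≤ c := by
  refine ContinuousLinearMap.opNorm_le_bound T hc fun f => ?_
  have key : ‖T f‖ ≤ ‖(c : ℂ) • f‖ := by
    rw [MeasureTheory.Lp.norm_def, MeasureTheory.Lp.norm_def]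
    refine ENNReal.toReal_mono (MeasureTheory.Lp.eLpNorm_ne_top _) ?_
    refine eLpNorm_mono_ae ?_
    filter_upwards [hT f, MeasureTheory.Lp.coeFn_smul (c : ℂ) f] with θ h1 h2
    rw [h1, h2]
    simp only [Pi.smul_apply, smul_eq_mul, norm_mul]
    apply mul_le_mul_of_nonneg_right _ (norm_nonneg _)
    rw [Complex.norm_real, Complex.norm_real, Real.norm_eq_abs, Real.norm_eq_abs,
      _root_.abs_of_nonneg hc]
    exact hb θ
  calc ‖T f‖ ≤ ‖(c : ℂ) • f‖ := key
    _ = c * ‖f‖ := by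
        rw [norm_smul, Complex.norm_real, Real.norm_eq_abs, _root_.abs_of_nonneg hc]

lemma mulOpLike_norm_ge {T : H2 →L[ℂ] H2} {h : Circ → ℝ}
    (hT : ∀ f : H2, (T f : Circ → ℂ) =ᵐ[volume] fun θ => (h θ : ℂ) * (f : Circ → ℂ) θ)
    {c : ℝ} (hc : 0 ≤ c) {s : Set Circ} (hsm : MeasurableSet s) (hs0 : volume s ≠ 0)
    (hb : ∀ θ ∈ s, c ≤ |h θ|) : c ≤ ‖T‖ := by
  have hsT : (volume : Measure Circ) s ≠ ⊤ := measure_ne_top _ _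
  set f : H2 := indicatorConstLp 2 hsm hsT (1 : ℂ) with hf
  have hfnorm : ‖f‖ = ((volume : Measure Circ) s).toReal ^ (1 / (2:ℝ)) := by
    rw [hf, norm_indicatorConstLp (by norm_num) (by norm_num)]
    norm_num
    rfl
  have hfpos : 0 < ‖f‖ := by
    rw [hfnorm]
    exact Real.rpow_pos_of_pos (ENNReal.toReal_pos hs0 hsT) _
  have key : c * ‖f‖ ≤ ‖T f‖ := by
    have : ‖(c : ℂ) • f‖ ≤ ‖T f‖ := by
      rw [MeasureTheory.Lp.norm_def, MeasureTheory.Lp.norm_def]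
      refine ENNReal.toReal_mono (MeasureTheory.Lp.eLpNorm_ne_top _) ?_
      refine eLpNorm_mono_ae ?_
      have hind : (f : Circ → ℂ) =ᵐ[volume] s.indicator fun _ => (1:ℂ) :=
        MeasureTheory.indicatorConstLp_coeFn
      filter_upwards [hT f, MeasureTheory.Lp.coeFn_smul (c : ℂ) f, hind] with θ h1 h2 h3
      rw [h1, h2]
      simp only [Pi.smul_apply, smul_eq_mul, norm_mul]
      by_cases hθ : θ ∈ s
      · rw [h3, Set.indicator_of_mem hθ]
        simp only [norm_one, mul_one]
        rw [Complex.norm_real, Complex.norm_real, Real.norm_eq_abs, Real.norm_eq_abs,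
          _root_.abs_of_nonneg hc]
        exact hb θ hθ
      · rw [h3, Set.indicator_of_notMem hθ]
        simp
    calc c * ‖f‖ = ‖(c : ℂ) • f‖ := by
          rw [norm_smul, Complex.norm_real, Real.norm_eq_abs, _root_.abs_of_nonneg hc]
      _ ≤ ‖T f‖ := this
  have := key.trans (T.le_opNorm f)
  exact le_of_mul_le_mul_right (by linarith [this]) hfpos

section ConjAdAlg
variable {U : ℝ → H2 →L[ℂ] H2} (h0 : U 0 = 1)
  (hadd : ∀ s t : ℝ, U (s + t) = (U s).comp (U t))
  (hiso : ∀ (t : ℝ) (ξ : H2), ‖U t ξ‖ = ‖ξ‖)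

include h0 hadd in
lemma U_cancel : ∀ (s : ℝ) (y : H2), U s (U (-s) y) = y := by
  intro s y
  have h1 : U s ((U (-s)) y) = (U (s + -s)) y := by rw [hadd]; rfl
  rw [h1, add_neg_cancel, h0, ContinuousLinearMap.one_apply]

include h0 hadd in
lemma U_cancel' : ∀ (s : ℝ) (y : H2), U (-s) (U s y) = y := by
  intro s y
  simpa [neg_neg] using U_cancel h0 hadd (-s) y

include h0 hadd hiso in
lemma conjAd_norm_eq (t : ℝ) (A : H2 →L[ℂ] H2) : ‖conjAd U t A‖ = ‖A‖ := by
  have hle : ∀ (r : ℝ) (B : H2 →L[ℂ] H2), ‖conjAd U r B‖ ≤ ‖B‖ := by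
    intro r B
    refine ContinuousLinearMap.opNorm_le_bound _ (norm_nonneg B) fun x => ?_
    show ‖U r (B (U (-r) x))‖ ≤ ‖B‖ * ‖x‖
    rw [hiso]
    calc ‖B (U (-r) x)‖ ≤ ‖B‖ * ‖U (-r) x‖ := B.le_opNorm _
      _ = ‖B‖ * ‖x‖ := by rw [hiso]
  refine le_antisymm (hle t A) ?_
  have hAA : conjAd U (-t) (conjAd U t A) = A := by
    refine ContinuousLinearMap.ext fun x => ?_
    show U (-t) ((conjAd U t A) (U (-(-t)) x)) = A x
    rw [neg_neg]
    show U (-t) (U t (A (U (-t) (U t x)))) = A x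
    rw [U_cancel' h0 hadd, U_cancel' h0 hadd]
  calc ‖A‖ = ‖conjAd U (-t) (conjAd U t A)‖ := by rw [hAA]
    _ ≤ ‖conjAd U t A‖ := hle _ _

include h0 hadd hiso in
lemma conjAd_sub_norm_symm (t : ℝ) (A : H2 →L[ℂ] H2) :
    ‖conjAd U (-t) A - A‖ = ‖conjAd U t A - A‖ := by
  have h1 : conjAd U (-t) (conjAd U t A - A) = A - conjAd U (-t) A := by
    refine ContinuousLinearMap.ext fun x => ?_
    show U (-t) ((conjAd U t A - A) (U (-(-t)) x)) = (A - conjAd U (-t) A) x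
    rw [neg_neg]
    simp only [ContinuousLinearMap.sub_apply, map_sub]
    show U (-t) (U t (A (U (-t) (U t x)))) - U (-t) (A (U t x)) = A x - U (-t) (A (U (-(-t)) x))
    rw [U_cancel' h0 hadd, U_cancel' h0 hadd, neg_neg]
  calc ‖conjAd U (-t) A - A‖ = ‖-(conjAd U (-t) A - A)‖ := (norm_neg _).symm
    _ = ‖A - conjAd U (-t) A‖ := by rw [neg_sub]
    _ = ‖conjAd U (-t) (conjAd U t A - A)‖ := by rw [h1]
    _ = ‖conjAd U t A - A‖ := conjAd_norm_eq h0 hadd hiso _ _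

end ConjAdAlg

-- paste from aux1 (absFun lemmas)
lemma two_pi_pos : (0:ℝ) < 2 * Real.pi := by positivity
lemma mem_Ioc' {x : ℝ} (hx : x ∈ Set.Ioc (-Real.pi) Real.pi) :
    x ∈ Set.Ioc (-Real.pi) (-Real.pi + 2 * Real.pi) := by
  rwa [show -Real.pi + 2 * Real.pi = Real.pi by ring]
lemma absFun_coe {x : ℝ} (hx : x ∈ Set.Ioc (-Real.pi) Real.pi) : absFun (x : Circ) = |x| :=
  AddCircle.liftIoc_coe_apply (mem_Ioc' hx)
lemma circ_exists_rep (q : Circ) : ∃ x : ℝ, x ∈ Set.Ioc (-Real.pi) Real.pi ∧ (x : Circ) = q := by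
  let z := AddCircle.equivIoc (2 * Real.pi) (-Real.pi) q
  refine ⟨z.1, ?_, ?_⟩
  · have h2 := z.2
    simp only [Set.mem_Ioc] at h2 ⊢
    refine ⟨h2.1, le_trans h2.2 (by ring_nf; exact le_refl _)⟩
  · exact (AddCircle.equivIoc (2 * Real.pi) (-Real.pi)).symm_apply_apply q
lemma norm_coe_of_le {t : ℝ} (ht : |t| ≤ Real.pi) : ‖(t : Circ)‖ = |t| := by
  rw [AddCircle.norm_coe_eq_abs_iff _ two_pi_pos.ne']
  rw [abs_of_pos two_pi_pos]
  linarith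
lemma absFun_eq_norm (q : Circ) : absFun q = ‖q‖ := by
  obtain ⟨x, hx, rfl⟩ := circ_exists_rep q
  rw [absFun_coe hx, norm_coe_of_le (abs_le.2 ⟨hx.1.le, hx.2⟩)]
lemma abs_absFun_sub (q r : Circ) : |absFun q - absFun r| ≤ ‖q - r‖ := by
  rw [absFun_eq_norm, absFun_eq_norm]
  exact abs_norm_sub_norm_le q r
lemma norm_coe_le (t : ℝ) : ‖(t : Circ)‖ ≤ |t| := by
  simpa using QuotientAddGroup.norm_mk_le_norm (S := AddSubgroup.zmultiples (2 * Real.pi)) (m := t)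
-- end paste

lemma gdiff_abs_le (t : ℝ) (θ : Circ) : |absFun (θ + (t : Circ)) - absFun θ| ≤ |t| := by
  refine le_trans (abs_absFun_sub _ _) ?_
  rw [add_sub_cancel_left]
  exact norm_coe_le t

lemma diff_isMulOp {U : ℝ → H2 →L[ℂ] H2} (hUt : IsTranslation U) {g : Circ → ℝ}
    {M : H2 →L[ℂ] H2} (hM : IsMulOp g M) (t : ℝ) (f : H2) :
    ((conjAd U t M - M) f : Circ → ℂ) =ᵐ[volume]
      fun θ => ((g (θ + (t : Circ)) - g θ : ℝ) : ℂ) * (f : Circ → ℂ) θ := by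
  have h1 := conjAd_ae hUt hM t f
  have h2 := hM f
  have h3 : ((conjAd U t M - M) f : Circ → ℂ) =ᵐ[volume]
      fun θ => (conjAd U t M f : Circ → ℂ) θ - (M f : Circ → ℂ) θ := by
    have := MeasureTheory.Lp.coeFn_sub (conjAd U t M f) (M f)
    filter_upwards [this] with θ hθ
    rw [ContinuousLinearMap.sub_apply]
    exact hθ
  refine h3.trans ?_
  filter_upwards [h1, h2] with θ e1 e2
  rw [e1, e2]
  push_cast
  ring

-- positive measure of image of open interval
lemma circ_image_measure {u v : ℝ} (huv : u < v) :
    MeasurableSet ((fun x : ℝ => (x : Circ)) '' Set.Ioo u v) ∧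
      (volume : Measure Circ) ((fun x : ℝ => (x : Circ)) '' Set.Ioo u v) ≠ 0 := by
  have hopen : IsOpen ((fun x : ℝ => (x : Circ)) '' Set.Ioo u v) :=
    QuotientAddGroup.isOpenMap_coe _ isOpen_Ioo
  refine ⟨hopen.measurableSet, hopen.measure_ne_zero volume ?_⟩
  exact ⟨(((u+v)/2 : ℝ) : Circ), ⟨(u+v)/2, ⟨by linarith, by linarith⟩, rfl⟩⟩

lemma norm_conjAd_sub {U : ℝ → H2 →L[ℂ] H2} (h0 : U 0 = 1)
    (hadd : ∀ s t : ℝ, U (s + t) = (U s).comp (U t))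
    (hiso : ∀ (t : ℝ) (ξ : H2), ‖U t ξ‖ = ‖ξ‖)
    (hUt : IsTranslation U) {Mabs : H2 →L[ℂ] H2} (hMabs : IsMulOp absFun Mabs) :
    ∀ t : ℝ, |t| ≤ Real.pi → ‖conjAd U t Mabs - Mabs‖ = |t| := by
  have pi_pos := Real.pi_pos
  have main : ∀ t : ℝ, 0 ≤ t → t ≤ Real.pi → ‖conjAd U t Mabs - Mabs‖ = t := by
    intro t ht0 htpi
    have hT := diff_isMulOp hUt hMabs t
    refine le_antisymm ?_ ?_
    · refine mulOpLike_norm_le hT ht0 fun θ => ?_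
      exact (gdiff_abs_le t θ).trans_eq (_root_.abs_of_nonneg ht0)
    · rcases eq_or_lt_of_le ht0 with h|htpos
      · rw [← h]; exact norm_nonneg _
      refine le_of_forall_lt_imp_le_of_dense fun c hc => ?_
      rcases le_or_gt c 0 with hcle|hcpos
      · exact hcle.trans (norm_nonneg _)
      obtain ⟨hmeas, hne⟩ := circ_image_measure
        (show (0:ℝ) < Real.pi - (t + c)/2 by linarith)
      refine mulOpLike_norm_ge hT hcpos.le hmeas hne ?_
      rintro θ ⟨x, hx, rfl⟩
      have hx0 : 0 < x := hx.1
      have hxr : x < Real.pi - (t + c)/2 := hx.2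
      have hxmem : x ∈ Set.Ioc (-Real.pi) Real.pi := ⟨by linarith, by linarith⟩
      have hax : absFun (x : Circ) = x := by rw [absFun_coe hxmem, abs_of_pos hx0]
      have hcoe : ((x : Circ) + (t : Circ)) = ((x + t : ℝ) : Circ) := rfl
      rcases le_or_gt (x + t) Real.pi with hcase|hcase
      · have habs : absFun ((x : Circ) + (t : Circ)) = x + t := by
          rw [hcoe, absFun_coe ⟨by linarith, hcase⟩, abs_of_pos (by linarith)]
        rw [habs, hax]
        rw [show x + t - x = t by ring, _root_.abs_of_nonneg ht0]
        linarith
      · have h2 : ((x + t : ℝ) : Circ) = ((x + t - 2*Real.pi : ℝ) : Circ) := by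
          conv_lhs => rw [show x + t = (x + t - 2*Real.pi) + 2*Real.pi by ring]
          exact AddCircle.coe_add_period (2*Real.pi) (x + t - 2*Real.pi)
        have hmem2 : x + t - 2*Real.pi ∈ Set.Ioc (-Real.pi) Real.pi := ⟨by linarith, by linarith⟩
        have habs : absFun ((x : Circ) + (t : Circ)) = 2*Real.pi - (x + t) := by
          rw [hcoe, h2, absFun_coe hmem2, abs_of_nonpos (by linarith)]
          ring
        rw [habs, hax]
        rw [show 2*Real.pi - (x + t) - x = 2*Real.pi - 2*x - t by ring,
          _root_.abs_of_nonneg (by linarith)]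
        linarith
  intro t ht
  rcases le_or_gt 0 t with h|h
  · rw [_root_.abs_of_nonneg h]
    exact main t h (by rwa [_root_.abs_of_nonneg h] at ht)
  · rw [abs_of_neg h]
    rw [← conjAd_sub_norm_symm h0 hadd hiso t Mabs]
    exact main (-t) (by linarith) (by rwa [abs_of_neg h] at ht)

lemma signFun_coe {x : ℝ} (hx : x ∈ Set.Ioc (-Real.pi) Real.pi) : signFun (x : Circ) = Real.sign x :=
  AddCircle.liftIoc_coe_apply (mem_Ioc' hx)
lemma absFun_le_pi (q : Circ) : |absFun q| ≤ Real.pi := by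
  obtain ⟨x, hx, rfl⟩ := circ_exists_rep q
  rw [absFun_coe hx, _root_.abs_abs]
  exact abs_le.2 ⟨hx.1.le, hx.2⟩
lemma measurable_absFun : Measurable absFun := by
  unfold absFun AddCircle.liftIoc
  exact (measurable_subtype_coe.comp
    (AddCircle.measurableEquivIoc (2 * Real.pi) (-Real.pi)).measurable).abs
lemma measurable_signFun : Measurable signFun := by
  unfold signFun AddCircle.liftIoc
  have h : Measurable (Real.sign) := by
    have e : Real.sign = fun x : ℝ => if x < 0 then (-1:ℝ) else if 0 < x then 1 else 0 := by
      funext x; rfl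
    rw [e]
    exact Measurable.ite (measurableSet_lt measurable_id measurable_const) measurable_const
      (Measurable.ite (measurableSet_lt measurable_const measurable_id) measurable_const
        measurable_const)
  exact (h.comp (measurable_subtype_coe.comp
    (AddCircle.measurableEquivIoc (2 * Real.pi) (-Real.pi)).measurable))

lemma coe_inj_Ioc {x y : ℝ} (hx : x ∈ Set.Ioc (-Real.pi) (-Real.pi + 2*Real.pi))
    (hy : y ∈ Set.Ioc (-Real.pi) (-Real.pi + 2*Real.pi)) (h : (x : Circ) = y) : x = y := by
  have ex : (AddCircle.equivIoc (2*Real.pi) (-Real.pi)) (x : Circ) = ⟨x, hx⟩ := by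
    rw [Equiv.apply_eq_iff_eq_symm_apply]; rfl
  have ey : (AddCircle.equivIoc (2*Real.pi) (-Real.pi)) (y : Circ) = ⟨y, hy⟩ := by
    rw [Equiv.apply_eq_iff_eq_symm_apply]; rfl
  rw [h, ey] at ex
  exact (Subtype.mk_eq_mk.mp ex.symm)

lemma circ_singleton_null (q : Circ) : (volume : Measure Circ) {q} = 0 := by
  rw [AddCircle.add_projection_respects_measure (2*Real.pi) (-Real.pi)
    (measurableSet_singleton q)]
  have hsub : ((QuotientAddGroup.mk ⁻¹' {q} : Set ℝ) ∩
      Set.Ioc (-Real.pi) (-Real.pi + 2*Real.pi)).Subsingleton := by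
    rintro x ⟨hx1, hx2⟩ y ⟨hy1, hy2⟩
    simp only [Set.mem_preimage, Set.mem_singleton_iff] at hx1 hy1
    exact coe_inj_Ioc hx2 hy2 (hx1.trans hy1.symm)
  exact hsub.measure_zero _

lemma sign_cast {x : ℝ} (h : x ≠ 0) : ((SignType.sign x : ℝ)) = Real.sign x := by
  rcases lt_or_gt_of_ne h with hx|hx
  · rw [Real.sign_of_neg hx]; simp [sign_neg hx]
  · rw [Real.sign_of_pos hx]; simp [sign_pos hx]

lemma ae_hasDerivAt_absFun :
    ∀ᵐ θ : Circ ∂volume, HasDerivAt (fun t : ℝ => absFun (θ + (t : Circ))) (signFun θ) 0 := by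
  have hnull : (volume : Measure Circ) {((0:ℝ) : Circ), ((Real.pi : ℝ) : Circ)} = 0 :=
    measure_union_null (circ_singleton_null _) (circ_singleton_null _)
  rw [MeasureTheory.ae_iff]
  refine measure_mono_null ?_ hnull
  intro θ hθ
  simp only [Set.mem_setOf_eq] at hθ
  by_contra hmem
  apply hθ
  simp only [Set.mem_insert_iff, Set.mem_singleton_iff] at hmem
  push_neg at hmem
  obtain ⟨x, hx, rfl⟩ := circ_exists_rep θ
  have hx0 : x ≠ 0 := fun h => hmem.1 (by rw [h])
  have hxpi : x ≠ Real.pi := fun h => hmem.2 (by rw [h])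
  have hxlt : x < Real.pi := lt_of_le_of_ne hx.2 hxpi
  -- derivative of t ↦ |x + t| at 0
  have habs : HasDerivAt (fun y : ℝ => |y|) ((SignType.sign x : ℝ)) x := hasDerivAt_abs hx0
  have hadd : HasDerivAt (fun t : ℝ => x + t) 1 0 := (hasDerivAt_id 0).const_add x
  have hcomp : HasDerivAt (fun t : ℝ => |x + t|) ((SignType.sign x : ℝ)) 0 := by
    have h1 : HasDerivAt (fun y : ℝ => |y|) ((SignType.sign x : ℝ)) ((fun t : ℝ => x + t) 0) := by
      simpa using habs
    have h2 := HasDerivAt.scomp (0:ℝ) h1 hadd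
    rw [one_smul] at h2
    exact h2
  have heq : (fun t : ℝ => absFun ((x:Circ) + (t:Circ))) =ᶠ[nhds (0:ℝ)] fun t => |x + t| := by
    have hδ : 0 < min (Real.pi - x) (x + Real.pi) :=
      lt_min (by linarith) (by linarith [hx.1])
    filter_upwards [Metric.ball_mem_nhds (0:ℝ) hδ] with t ht
    rw [Metric.mem_ball, Real.dist_eq, sub_zero] at ht
    have habs' := abs_lt.mp ht
    have hmin1 := min_le_left (Real.pi - x) (x + Real.pi)
    have hmin2 := min_le_right (Real.pi - x) (x + Real.pi)
    have h1 : x + t ∈ Set.Ioc (-Real.pi) Real.pi :=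
      ⟨by linarith [habs'.1], by linarith [habs'.2]⟩
    show absFun ((x:Circ)+(t:Circ)) = |x+t|
    rw [show (x:Circ)+(t:Circ) = ((x+t:ℝ):Circ) from rfl, absFun_coe h1]
  have final := hcomp.congr_of_eventuallyEq heq
  rw [signFun_coe hx, ← sign_cast hx0]
  exact final

lemma hasDerivAt_integral_absFun (ψ : Circ → ℂ) (hψ : Integrable ψ (volume : Measure Circ)) :
    HasDerivAt (fun t : ℝ => ∫ θ : Circ, ((absFun (θ + (t : Circ)) : ℝ) : ℂ) * ψ θ)
      (∫ θ : Circ, ((signFun θ : ℝ) : ℂ) * ψ θ) 0 := by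
  have hzero : ∀ θ : Circ, θ + (((0:ℝ)) : Circ) = θ := by
    intro θ
    rw [show (((0:ℝ)) : Circ) = 0 from rfl, add_zero]
  have hmeasadd : ∀ t : ℝ, AEStronglyMeasurable
      (fun θ : Circ => ((absFun (θ + (t:Circ)) : ℝ) : ℂ) * ψ θ) volume := by
    intro t
    refine AEStronglyMeasurable.mul ?_ hψ.1
    exact (Complex.measurable_ofReal.comp (measurable_absFun.comp
      ((continuous_add_right ((t:ℝ):Circ)).measurable))).aestronglyMeasurable
  refine (hasDerivAt_integral_of_dominated_loc_of_lip
    (F := fun (t : ℝ) (θ : Circ) => ((absFun (θ + (t:Circ)) : ℝ) : ℂ) * ψ θ)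
    (F' := fun θ : Circ => ((signFun θ : ℝ) : ℂ) * ψ θ)
    (bound := fun θ : Circ => ‖ψ θ‖)
    Filter.univ_mem (Filter.Eventually.of_forall hmeasadd) ?_ ?_ ?_ hψ.norm ?_).2
  · -- Integrable (F 0)
    have : Integrable (fun θ : Circ => ((absFun θ : ℝ) : ℂ) * ψ θ) volume := by
      refine Integrable.bdd_mul (c := Real.pi) hψ ?_ (Filter.Eventually.of_forall fun θ => ?_)
      · exact (Complex.measurable_ofReal.comp measurable_absFun).aestronglyMeasurable
      · rw [Complex.norm_real, Real.norm_eq_abs]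
        exact absFun_le_pi θ
    simpa only [hzero] using this
  · exact ((Complex.measurable_ofReal.comp measurable_signFun).aestronglyMeasurable).mul hψ.1
  · refine Filter.Eventually.of_forall fun θ => ?_
    have hlip : LipschitzWith (Real.nnabs ‖ψ θ‖)
        (fun t : ℝ => ((absFun (θ + (t:Circ)) : ℝ) : ℂ) * ψ θ) := by
      refine LipschitzWith.of_dist_le_mul fun s t => ?_
      have he : (((absFun (θ + (s:Circ)) : ℝ):ℂ) * ψ θ - ((absFun (θ + (t:Circ)) : ℝ):ℂ) * ψ θ)
          = (((absFun (θ + (s:Circ)) - absFun (θ + (t:Circ)) : ℝ)):ℂ) * ψ θ := by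
        push_cast; ring
      rw [dist_eq_norm, he, norm_mul, Complex.norm_real, Real.norm_eq_abs, Real.coe_nnabs,
        Real.dist_eq, _root_.abs_of_nonneg (norm_nonneg (ψ θ))]
      have hΔ : |absFun (θ + (s:Circ)) - absFun (θ + (t:Circ))| ≤ |s - t| := by
        refine le_trans (abs_absFun_sub _ _) ?_
        have hc : (θ + (s:Circ)) - (θ + (t:Circ)) = (((s - t : ℝ)) : Circ) := by
          rw [show ((s - t:ℝ):Circ) = (s:Circ) - (t:Circ) from
            QuotientAddGroup.mk_sub _ s t]
          abel
        rw [hc]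
        exact norm_coe_le _
      calc |absFun (θ + (s:Circ)) - absFun (θ + (t:Circ))| * ‖ψ θ‖
          ≤ |s - t| * ‖ψ θ‖ := mul_le_mul_of_nonneg_right hΔ (norm_nonneg _)
        _ = ‖ψ θ‖ * |s - t| := mul_comm _ _
    exact hlip.lipschitzOnWith
  · filter_upwards [ae_hasDerivAt_absFun] with θ hθ
    exact (hθ.ofReal_comp).mul_const (ψ θ)

lemma U_adj {U : ℝ → H2 →L[ℂ] H2} (h0 : U 0 = 1)
    (hadd : ∀ s t : ℝ, U (s + t) = (U s).comp (U t))
    (hiso : ∀ (t : ℝ) (ξ : H2), ‖U t ξ‖ = ‖ξ‖) (t : ℝ) (x y : H2) :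
    ⟪U t x, y⟫ = ⟪x, U (-t) y⟫ := by
  have hy : U t (U (-t) y) = y := U_cancel h0 hadd t y
  have him := LinearIsometry.inner_map_map
    (⟨(U t : H2 →ₗ[ℂ] H2), hiso t⟩ : H2 →ₗᵢ[ℂ] H2) x (U (-t) y)
  calc ⟪U t x, y⟫ = ⟪U t x, U t (U (-t) y)⟫ := by rw [hy]
    _ = ⟪x, U (-t) y⟫ := him

lemma weak_deriv_eq (D : H2 →ₗ.[ℂ] H2) (U : ℝ → H2 →L[ℂ] H2) (hU : IsStoneGroupOf D U)
    (hUt : IsTranslation U) (Mabs Msign : H2 →L[ℂ] H2)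
    (hMabs : IsMulOp absFun Mabs) (hMsign : IsMulOp signFun Msign) :
    IsWeakDeriv D Mabs ((-Complex.I) • Msign) := by
  intro ξ η
  have h0 := hU.map_zero
  have hadd := hU.map_add
  have hiso := hU.isometry
  set ψ : Circ → ℂ :=
    fun θ => (starRingEnd ℂ) (((ξ : H2) : Circ → ℂ) θ) * (((η : H2)) : Circ → ℂ) θ with hψdef
  have hψint : Integrable ψ (volume : Measure Circ) := by
    have h := MeasureTheory.L2.integrable_inner (𝕜 := ℂ) (ξ : H2) ((η : H2))
    simpa [hψdef, RCLike.inner_apply, mul_comm] using h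
  have step1 : ∀ t : ℝ, ⟪conjAd U t Mabs (ξ : H2), ((η : H2))⟫
      = ∫ θ : Circ, ((absFun (θ + (t : Circ)) : ℝ) : ℂ) * ψ θ := by
    intro t
    rw [MeasureTheory.L2.inner_def]
    refine integral_congr_ae ?_
    filter_upwards [conjAd_ae hUt hMabs t (ξ : H2)] with θ hθ
    rw [RCLike.inner_apply, hθ]
    simp only [hψdef, map_mul, Complex.conj_ofReal]
    ring
  have hFeq : (fun t : ℝ => ⟪conjAd U t Mabs (ξ : H2), ((η : H2))⟫)
      = fun t : ℝ => ⟪Mabs (U (-t) (ξ : H2)), U (-t) ((η : H2))⟫ := by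
    funext t
    have hc : conjAd U t Mabs (ξ : H2) = U t (Mabs (U (-t) (ξ : H2))) := rfl
    rw [hc, U_adj h0 hadd hiso]
  -- derivative via dominated convergence
  have hder1 : HasDerivAt (fun t : ℝ => ⟪conjAd U t Mabs (ξ : H2), ((η : H2))⟫)
      (∫ θ : Circ, ((signFun θ : ℝ) : ℂ) * ψ θ) 0 := by
    have h := hasDerivAt_integral_absFun ψ hψint
    have he : (fun t : ℝ => ⟪conjAd U t Mabs (ξ : H2), ((η : H2))⟫)
        = fun t : ℝ => ∫ θ : Circ, ((absFun (θ + (t : Circ)) : ℝ) : ℂ) * ψ θ := funext step1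
    rw [he]
    exact h
  -- derivative via Stone group
  have hneg : ∀ z : D.domain, HasDerivAt (fun t : ℝ => U (-t) (z : H2))
      (-(Complex.I • D z)) 0 := by
    intro z
    have hminus : HasDerivAt (fun t : ℝ => -t) (-1 : ℝ) 0 := (hasDerivAt_id (0:ℝ)).neg
    have h1 : HasDerivAt (fun s : ℝ => U s (z : H2)) (Complex.I • D z) ((fun t : ℝ => -t) 0) := by
      simpa using hU.hasDerivAt z
    have h2 := HasDerivAt.scomp (0:ℝ) h1 hminus
    have h3 : ((-1 : ℝ) • (Complex.I • D z)) = -(Complex.I • D z) := by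
      rw [neg_smul, one_smul]
    rw [h3] at h2
    exact h2
  have hMξ : HasDerivAt (fun t : ℝ => Mabs (U (-t) (ξ : H2)))
      (Mabs (-(Complex.I • D ξ))) 0 := by
    have h := HasFDerivAt.comp_hasDerivAt (l := Mabs.restrictScalars ℝ) 0
      (Mabs.restrictScalars ℝ).hasFDerivAt (hneg ξ)
    simp [Function.comp, ContinuousLinearMap.coe_restrictScalars'] at h ⊢
    exact h
  have hinner := HasDerivAt.inner ℂ hMξ (hneg η)
  have hval : (fun t : ℝ => ⟪Mabs (U (-t) (ξ : H2)), U (-t) ((η : H2))⟫)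
      = fun t : ℝ => ⟪conjAd U t Mabs (ξ : H2), ((η : H2))⟫ := hFeq.symm
  have hder2 : HasDerivAt (fun t : ℝ => ⟪conjAd U t Mabs (ξ : H2), ((η : H2))⟫)
      (⟪Mabs (U (-(0:ℝ)) (ξ : H2)), -(Complex.I • D η)⟫
        + ⟪Mabs (-(Complex.I • D ξ)), U (-(0:ℝ)) ((η : H2))⟫) 0 := by
    rw [← hval]
    exact hinner
  have hU0 : ∀ z : H2, U (-(0:ℝ)) z = z := by
    intro z
    rw [neg_zero, h0, ContinuousLinearMap.one_apply]
  rw [hU0, hU0] at hder2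
  have huniq := hder1.unique hder2
  -- value of the sign integral as inner product
  have step5 : ⟪Msign (ξ : H2), ((η : H2))⟫ = ∫ θ : Circ, ((signFun θ : ℝ) : ℂ) * ψ θ := by
    rw [MeasureTheory.L2.inner_def]
    refine integral_congr_ae ?_
    filter_upwards [hMsign (ξ : H2)] with θ hθ
    rw [RCLike.inner_apply, hθ]
    simp only [hψdef, map_mul, Complex.conj_ofReal]
    ring
  -- final algebra
  have hkey : ⟪Msign (ξ : H2), ((η : H2))⟫
      = ⟪Mabs (ξ : H2), -(Complex.I • D η)⟫ + ⟪Mabs (-(Complex.I • D ξ)), ((η : H2))⟫ := by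
    rw [step5, huniq]
  have ha : ⟪Mabs (ξ : H2), -(Complex.I • D η)⟫
      = -(Complex.I * ⟪Mabs (ξ : H2), D η⟫) := by
    rw [inner_neg_right, inner_smul_right]
  have hb : ⟪Mabs (-(Complex.I • D ξ)), ((η : H2))⟫
      = Complex.I * ⟪Mabs (D ξ), ((η : H2))⟫ := by
    rw [map_neg, Mabs.map_smul, inner_neg_left, inner_smul_left]
    simp [Complex.conj_I]
  show ⟪((-Complex.I) • Msign) (ξ : H2), ((η : H2))⟫
      = ⟪Mabs (ξ : H2), D η⟫ - ⟪Mabs (D ξ), ((η : H2))⟫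
  rw [ContinuousLinearMap.smul_apply, inner_smul_left]
  rw [map_neg, Complex.conj_I, neg_neg, hkey, ha, hb]
  set a := ⟪Mabs (ξ : H2), D η⟫
  set b := ⟪Mabs (D ξ), ((η : H2))⟫
  linear_combination (b - a) * Complex.I_sq


/-- On `L²(𝕋)` with `D = (1/i) d/dθ`, the multiplication operator `M_{|x|}` is weakly
`D`-differentiable with `wD(M_{|x|}) = (1/i) M_{sign(x)} = −i M_{sign(x)}`, and
`‖α_t(M_{|x|}) − M_{|x|}‖ = |t|` for `|t| ≤ π`. -/
theorem absFun_mulOp_weakly_differentiable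
    (D : H2 →ₗ.[ℂ] H2) (hD : IsSelfAdjoint D)
    (U : ℝ → H2 →L[ℂ] H2) (hU : IsStoneGroupOf D U) (hUt : IsTranslation U)
    (Mabs Msign : H2 →L[ℂ] H2)
    (hMabs : IsMulOp absFun Mabs) (hMsign : IsMulOp signFun Msign) :
    IsWeakDeriv D Mabs ((-Complex.I) • Msign) ∧
      ∀ t : ℝ, |t| ≤ Real.pi → ‖conjAd U t Mabs - Mabs‖ = |t| := by
  exact ⟨weak_deriv_eq D U hU hUt Mabs Msign hMabs hMsign,
    norm_conjAd_sub hU.map_zero hU.map_add hU.isometry hUt hMabs⟩
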